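/- Let Q be an idempotent left quasigroup, E = Aff(Q,A,g,f,θ) a central extension of Q by an abelian group A, and α = ker p_1. If α = O_{Dis_α}, then every block of α (each block {x}×A is a subalgebra of E, since Q is idempotent) is connected as a left quasigroup, i.e. LMlt of the block acts transitively on it. -/

import Mathlib

namespace PaperLQ

/-- A left quasigroup `(Q, ⬝, \)`: `x ⬝ (x \ y) = y = x \ (x ⬝ y)`. -/
structure LeftQuasigroup (Q : Type*) where
  mul : Q → Q → Q
  ldiv : Q → Q → Q
  mul_ldiv : ∀ x y, mul x (ldiv x y) = y
  ldiv_mul : ∀ x y, ldiv x (mul x y) = y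

namespace LeftQuasigroup

variable {Q : Type*}

/-- The left translation `L_x : y ↦ x ⬝ y`, as a permutation of `Q`. -/
def L (S : LeftQuasigroup Q) (x : Q) : Equiv.Perm Q where
  toFun := S.mul x
  invFun := S.ldiv x
  left_inv := S.ldiv_mul x
  right_inv := S.mul_ldiv x

/-- The left multiplication group `LMlt(Q) = ⟨L_x : x ∈ Q⟩`. -/
def LMlt (S : LeftQuasigroup Q) : Subgroup (Equiv.Perm Q) :=
  Subgroup.closure (Set.range S.L)

/-- The displacement group `Dis(Q) = ⟨L_x L_y⁻¹ : x, y ∈ Q⟩`. -/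
def Dis (S : LeftQuasigroup Q) : Subgroup (Equiv.Perm Q) :=
  Subgroup.closure {g : Equiv.Perm Q | ∃ x y : Q, g = S.L x * (S.L y)⁻¹}

/-- The orbit equivalence `O_N` of a subgroup `N`: `x O_N y` iff `x = h y` for some `h ∈ N`. -/
def orbRel (N : Subgroup (Equiv.Perm Q)) : Setoid Q where
  r x y := ∃ h ∈ N, x = h y
  iseqv := by
    constructor
    · exact fun x => ⟨1, N.one_mem, rfl⟩
    · rintro x y ⟨h, hh, rfl⟩
      exact ⟨h⁻¹, N.inv_mem hh, (Equiv.symm_apply_apply h y).symm⟩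
    · rintro x y z ⟨h, hh, rfl⟩ ⟨k, hk, rfl⟩
      exact ⟨h * k, N.mul_mem hh hk, (Equiv.Perm.mul_apply h k z).symm⟩

/-- The equivalence `c_N`: `x c_N y` iff `L_x L_y⁻¹ ∈ N`. -/
def cRel (S : LeftQuasigroup Q) (N : Subgroup (Equiv.Perm Q)) : Setoid Q where
  r x y := S.L x * (S.L y)⁻¹ ∈ N
  iseqv := by
    constructor
    · intro x; simpa using N.one_mem
    · intro x y h; simpa [mul_inv_rev] using N.inv_mem h
    · intro x y z h h'; simpa [mul_assoc] using N.mul_mem h h'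

/-- The Cayley kernel `λ_Q`: `x λ_Q y` iff `L_x = L_y`. -/
def cayley (S : LeftQuasigroup Q) : Setoid Q where
  r x y := S.L x = S.L y
  iseqv := ⟨fun _ => rfl, Eq.symm, Eq.trans⟩

/-- `α` is a congruence of the left quasigroup. -/
def IsCongruence (S : LeftQuasigroup Q) (α : Setoid Q) : Prop :=
  ∀ ⦃x y z t : Q⦄, α.r x z → α.r y t →
    α.r (S.mul x y) (S.mul z t) ∧ α.r (S.ldiv x y) (S.ldiv z t)

/-- The relative displacement group `Dis_α = ⟨h L_x L_y⁻¹ h⁻¹ : x α y, h ∈ LMlt(Q)⟩`. -/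
def disRel (S : LeftQuasigroup Q) (α : Setoid Q) : Subgroup (Equiv.Perm Q) :=
  Subgroup.closure
    {g : Equiv.Perm Q | ∃ x y h, α.r x y ∧ h ∈ S.LMlt ∧ g = h * (S.L x * (S.L y)⁻¹) * h⁻¹}

/-- The subgroup of permutations moving every point inside its `α`-class. -/
def apprSub (α : Setoid Q) : Subgroup (Equiv.Perm Q) where
  carrier := {h : Equiv.Perm Q | ∀ x : Q, α.r (h x) x}
  one_mem' := fun x => by
    simpa using α.iseqv.refl x
  mul_mem' := fun {a b} ha hb x => by
    rw [Equiv.Perm.mul_apply]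
    exact α.iseqv.trans (ha (b x)) (hb x)
  inv_mem' := fun {a} ha x => by
    have h := ha (a⁻¹ x)
    rw [show a (a⁻¹ x) = x from Equiv.apply_symm_apply a x] at h
    exact α.iseqv.symm h

/-- The group `Dis^α = {h ∈ Dis(Q) : h(x) α x for all x}`. -/
def disCo (S : LeftQuasigroup Q) (α : Setoid Q) : Subgroup (Equiv.Perm Q) :=
  S.Dis ⊓ apprSub α

/-- `N ∈ Norm'(Q)`: a normal subgroup of `LMlt(Q)` with `N ≤ Dis(Q)` and `O_N ≤ c_N`. -/
def MemNorm' (S : LeftQuasigroup Q) (N : Subgroup (Equiv.Perm Q)) : Prop :=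
  N ≤ S.Dis ∧ (∀ h ∈ S.LMlt, ∀ n ∈ N, h * n * h⁻¹ ∈ N) ∧ orbRel N ≤ S.cRel N

/-- The quotient left quasigroup `Q/α` for a congruence `α`. -/
def quot (S : LeftQuasigroup Q) (α : Setoid Q) (hα : S.IsCongruence α) :
    LeftQuasigroup (Quotient α) where
  mul := Quotient.lift₂ (fun x y => Quotient.mk α (S.mul x y))
    (fun _ _ _ _ h h' => Quotient.sound (hα h h').1)
  ldiv := Quotient.lift₂ (fun x y => Quotient.mk α (S.ldiv x y))
    (fun _ _ _ _ h h' => Quotient.sound (hα h h').2)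
  mul_ldiv := fun a b => Quotient.inductionOn₂ a b fun x y => by
    show Quotient.mk α (S.mul x (S.ldiv x y)) = Quotient.mk α y
    rw [S.mul_ldiv]
  ldiv_mul := fun a b => Quotient.inductionOn₂ a b fun x y => by
    show Quotient.mk α (S.ldiv x (S.mul x y)) = Quotient.mk α y
    rw [S.ldiv_mul]

/-- The image `π_α(N)` of a subgroup `N ≤ LMlt(Q)` in `Sym(Q/α)`: the permutations of
`Q/α` induced by some element of `N`. -/
def pushSub (α : Setoid Q) (N : Subgroup (Equiv.Perm Q)) :
    Subgroup (Equiv.Perm (Quotient α)) where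
  carrier := {g | ∃ h ∈ N, ∀ x : Q, g (Quotient.mk α x) = Quotient.mk α (h x)}
  one_mem' := ⟨1, N.one_mem, fun x => rfl⟩
  mul_mem' := fun {g₁ g₂} h₁ h₂ => by
    obtain ⟨k₁, hk₁, e₁⟩ := h₁
    obtain ⟨k₂, hk₂, e₂⟩ := h₂
    exact ⟨k₁ * k₂, N.mul_mem hk₁ hk₂, fun x => by
      rw [Equiv.Perm.mul_apply, Equiv.Perm.mul_apply, e₂ x, e₁ (k₂ x)]⟩
  inv_mem' := fun {g} h => by
    obtain ⟨k, hk, e⟩ := h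
    refine ⟨k⁻¹, N.inv_mem hk, fun x => ?_⟩
    have h' := e (k⁻¹ x)
    rw [show k (k⁻¹ x) = x from Equiv.apply_symm_apply k x] at h'
    rw [← h', show g⁻¹ (g (Quotient.mk α (k⁻¹ x))) = Quotient.mk α (k⁻¹ x) from
      Equiv.symm_apply_apply g _]

/-- `Q` is faithful if the Cayley kernel is trivial. -/
def Faithful (S : LeftQuasigroup Q) : Prop := S.cayley = ⊥

/-- `Q` is sharp: whenever `α ≤ β` are congruences with `β/α ≤ λ_{Q/α}`, then `α = β`. -/
def Sharp (S : LeftQuasigroup Q) : Prop :=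
  ∀ (α β : Setoid Q) (hα : S.IsCongruence α), S.IsCongruence β → α ≤ β →
    (∀ x y : Q, β.r x y →
      (S.quot α hα).L (Quotient.mk α x) = (S.quot α hα).L (Quotient.mk α y)) →
    α = β

/-- `Q` has congruences determined by orbits: `Dis^* : Con(Q) → Norm'(Q)` and
`O_* : Norm'(Q) → Con(Q)` are mutually inverse isomorphisms. -/
def CDOs (S : LeftQuasigroup Q) : Prop :=
  (∀ α : Setoid Q, S.IsCongruence α → orbRel (S.disCo α) = α) ∧
  (∀ N : Subgroup (Equiv.Perm Q), S.MemNorm' N → S.disCo (orbRel N) = N)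

/-- `Q` has congruences determined by subgroups: `Dis_* : Con(Q) → Norm'(Q)` and
`c_* : Norm'(Q) → Con(Q)` are mutually inverse isomorphisms. -/
def CDSg (S : LeftQuasigroup Q) : Prop :=
  (∀ α : Setoid Q, S.IsCongruence α → S.cRel (S.disRel α) = α) ∧
  (∀ N : Subgroup (Equiv.Perm Q), S.MemNorm' N → S.disRel (S.cRel N) = N)

/-- `Q` is connected: `LMlt(Q)` acts transitively. -/
def Connected (S : LeftQuasigroup Q) : Prop :=
  ∀ x y : Q, ∃ h ∈ S.LMlt, x = h y

/-- The subalgebra structure on a subset closed under `⬝` and `\`. -/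
def sub (S : LeftQuasigroup Q) (T : Set Q)
    (hm : ∀ ⦃x⦄, x ∈ T → ∀ ⦃y⦄, y ∈ T → S.mul x y ∈ T)
    (hd : ∀ ⦃x⦄, x ∈ T → ∀ ⦃y⦄, y ∈ T → S.ldiv x y ∈ T) : LeftQuasigroup T where
  mul a b := ⟨S.mul a b, hm a.2 b.2⟩
  ldiv a b := ⟨S.ldiv a b, hd a.2 b.2⟩
  mul_ldiv a b := Subtype.ext (S.mul_ldiv a b)
  ldiv_mul a b := Subtype.ext (S.ldiv_mul a b)

/-- `Q` is superconnected: every subalgebra is connected. -/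
def Superconnected (S : LeftQuasigroup Q) : Prop :=
  ∀ (T : Set Q) (hm : ∀ ⦃x⦄, x ∈ T → ∀ ⦃y⦄, y ∈ T → S.mul x y ∈ T)
    (hd : ∀ ⦃x⦄, x ∈ T → ∀ ⦃y⦄, y ∈ T → S.ldiv x y ∈ T),
    (S.sub T hm hd).Connected

/-- `Q` is idempotent: `x ⬝ x = x`. -/
def Idempotent (S : LeftQuasigroup Q) : Prop := ∀ x : Q, S.mul x x = x

/-- `Q` is latin: all right translations are bijective. -/
def Latin (S : LeftQuasigroup Q) : Prop :=
  ∀ x : Q, Function.Bijective fun y => S.mul y x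

/-- `Q` is semiregular: the stabilizer of any point in `Dis(Q)` is trivial. -/
def Semiregular (S : LeftQuasigroup Q) : Prop :=
  ∀ x : Q, ∀ h ∈ S.Dis, h x = x → h = 1

/-- The term operations of a left quasigroup: the clone generated by `⬝` and `\`. -/
inductive IsTermOp (S : LeftQuasigroup Q) : {n : ℕ} → ((Fin n → Q) → Q) → Prop
  | proj {n : ℕ} (i : Fin n) : IsTermOp S fun v => v i
  | mul {n : ℕ} {t s : (Fin n → Q) → Q} :
      IsTermOp S t → IsTermOp S s → IsTermOp S fun v => S.mul (t v) (s v)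
  | ldiv {n : ℕ} {t s : (Fin n → Q) → Q} :
      IsTermOp S t → IsTermOp S s → IsTermOp S fun v => S.ldiv (t v) (s v)

/-- The centrality relation `C(α, β; δ)` of commutator theory. -/
def Centralizes (S : LeftQuasigroup Q) (α β δ : Setoid Q) : Prop :=
  ∀ (n : ℕ) (t : (Fin (n + 1) → Q) → Q), S.IsTermOp t →
    ∀ x y : Q, α.r x y → ∀ z u : Fin n → Q, (∀ i, β.r (z i) (u i)) →
      δ.r (t (Fin.cons x z)) (t (Fin.cons x u)) →
      δ.r (t (Fin.cons y z)) (t (Fin.cons y u))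

/-- The center `ζ_Q`: the largest central congruence. -/
def center (S : LeftQuasigroup Q) : Setoid Q :=
  sSup {β : Setoid Q | S.IsCongruence β ∧ S.Centralizes β ⊤ ⊥}

/-- The upper central series: `ζ_0 = 0_Q` and `ζ_{n+1}/ζ_n = ζ_{Q/ζ_n}`. -/
def zeta (S : LeftQuasigroup Q) : ℕ → Setoid Q
  | 0 => ⊥
  | n + 1 =>
      sSup {β : Setoid Q | S.IsCongruence β ∧ S.zeta n ≤ β ∧ S.Centralizes β ⊤ (S.zeta n)}

/-- `Q` is nilpotent: the upper central series reaches `1_Q`. -/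
def Nilpotent (S : LeftQuasigroup Q) : Prop := ∃ n : ℕ, S.zeta n = ⊤

/-- The variety generated by `Q` has a Malt'sev term. -/
def Maltsev (S : LeftQuasigroup Q) : Prop :=
  ∃ m : Q → Q → Q → Q,
    S.IsTermOp (n := 3) (fun v => m (v 0) (v 1) (v 2)) ∧
    ∀ x y : Q, m x y y = x ∧ m y y x = x

/-- The central extension `E = Aff(Q, A, g, f, θ)` of `Q` by an abelian group `A`. -/
def affExt (S : LeftQuasigroup Q) (A : Type*) [AddCommGroup A]
    (g : A →+ A) (f : AddAut A) (θ : Q → Q → A) : LeftQuasigroup (Q × A) where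
  mul p q := (S.mul p.1 q.1, g p.2 + f q.2 + θ p.1 q.1)
  ldiv p q := (S.ldiv p.1 q.1, f.symm (q.2 - g p.2 - θ p.1 (S.ldiv p.1 q.1)))
  mul_ldiv := by
    rintro ⟨x, a⟩ ⟨y, b⟩
    dsimp only
    rw [S.mul_ldiv, AddEquiv.apply_symm_apply]
    refine Prod.ext rfl ?_
    dsimp only
    abel
  ldiv_mul := by
    rintro ⟨x, a⟩ ⟨y, b⟩
    dsimp only
    rw [S.ldiv_mul]
    refine Prod.ext rfl ?_
    dsimp only
    have h : g a + f b + θ x y - g a - θ x y = f b := by abel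
    rw [h, AddEquiv.symm_apply_apply]

/-- The affine left quasigroup `Aff(A, g, f, c)`: `a ⬝ b = g(a) + f(b) + c`. -/
def affine {A : Type*} [AddCommGroup A] (g : A →+ A) (f : AddAut A) (c : A) :
    LeftQuasigroup A where
  mul a b := g a + f b + c
  ldiv a b := f.symm (b - g a - c)
  mul_ldiv := by
    intro a b
    rw [AddEquiv.apply_symm_apply]
    abel
  ldiv_mul := by
    intro a b
    have h : g a + f b + c - g a - c = f b := by abel
    rw [h, AddEquiv.symm_apply_apply]

/-- The relation `α_N` on `Q × A`: `(x,a) α_N (y,b)` iff `x = y` and `a - b ∈ N`. -/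
def prodCongr (Q : Type*) {A : Type*} [AddCommGroup A] (N : AddSubgroup A) :
    Setoid (Q × A) where
  r p q := p.1 = q.1 ∧ p.2 - q.2 ∈ N
  iseqv := by
    constructor
    · exact fun p => ⟨rfl, by simpa using N.zero_mem⟩
    · rintro p q ⟨h1, h2⟩
      exact ⟨h1.symm, by simpa using N.neg_mem h2⟩
    · rintro p q r ⟨h1, h2⟩ ⟨h1', h2'⟩
      exact ⟨h1.trans h1', by simpa [sub_add_sub_cancel] using N.add_mem h2 h2'⟩




section BlockConnected

variable {Q A : Type*} [AddCommGroup A]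

def trP (s : A) : Equiv.Perm (Q × A) :=
  Equiv.prodCongr (Equiv.refl Q) (Equiv.addRight s)

@[simp] lemma trP_apply (s : A) (p : Q × A) : trP s p = (p.1, p.2 + s) := rfl

lemma trP_mul (s t : A) : (trP s : Equiv.Perm (Q × A)) * trP t = trP (t + s) := by
  ext p
  · simp [trP]
  · simp [trP, add_assoc]

lemma trP_zero : (trP (0 : A) : Equiv.Perm (Q × A)) = 1 := by
  ext p
  · simp [trP]
  · simp [trP]

lemma trP_inv (s : A) : (trP s : Equiv.Perm (Q × A))⁻¹ = trP (-s) :=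
  inv_eq_of_mul_eq_one_right (by rw [trP_mul, neg_add_cancel, trP_zero])

def blkTr (x : Q) (s : A) : Equiv.Perm ({p : Q × A | p.1 = x} : Set (Q × A)) where
  toFun q := ⟨(x, q.1.2 + s), rfl⟩
  invFun q := ⟨(x, q.1.2 - s), rfl⟩
  left_inv q := by
    apply Subtype.ext
    have hq : q.1.1 = x := q.2
    simp
    exact Prod.ext hq.symm rfl
  right_inv q := by
    apply Subtype.ext
    have hq : q.1.1 = x := q.2
    simp
    exact Prod.ext hq.symm rfl

@[simp] lemma blkTr_apply (x : Q) (s : A) (q : ({p : Q × A | p.1 = x} : Set (Q × A))) :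
    (blkTr x s q : Q × A) = (x, q.1.2 + s) := rfl

lemma blkTr_mul (x : Q) (s t : A) : blkTr x s * blkTr x t = blkTr (A := A) x (t + s) := by
  ext q
  all_goals simp [blkTr, Equiv.Perm.mul_apply, add_assoc]

lemma blkTr_zero (x : Q) : blkTr x (0 : A) = 1 := by
  ext q
  all_goals have hq : q.1.1 = x := q.2
  all_goals simp [blkTr, hq]

lemma blkTr_inv (x : Q) (s : A) : (blkTr x s)⁻¹ = blkTr x (-s) :=
  inv_eq_of_mul_eq_one_right (by rw [blkTr_mul, neg_add_cancel, blkTr_zero])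



theorem blockConnAux (S : LeftQuasigroup Q) (g : A →+ A) (f : AddAut A) (θ : Q → Q → A)
    (hidem : S.Idempotent)
    (horb : Setoid.ker (Prod.fst : Q × A → Q) =
      orbRel ((S.affExt A g f θ).disRel (Setoid.ker (Prod.fst : Q × A → Q))))
    (x : Q)
    (hm : ∀ ⦃p⦄, p ∈ {p : Q × A | p.1 = x} → ∀ ⦃q⦄, q ∈ {p : Q × A | p.1 = x} →
      (S.affExt A g f θ).mul p q ∈ {p : Q × A | p.1 = x})
    (hd : ∀ ⦃p⦄, p ∈ {p : Q × A | p.1 = x} → ∀ ⦃q⦄, q ∈ {p : Q × A | p.1 = x} →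
      (S.affExt A g f θ).ldiv p q ∈ {p : Q × A | p.1 = x}) :
    ((S.affExt A g f θ).sub {p : Q × A | p.1 = x} hm hd).Connected := by
  classical
  set E := S.affExt A g f θ with hE
  set T := E.sub {p : Q × A | p.1 = x} hm hd with hT
  have hldiv : S.ldiv x x = x := by
    have h := S.ldiv_mul x x; rwa [hidem x] at h
  have hLmem : ∀ u, T.L u ∈ T.LMlt := fun u => Subgroup.subset_closure ⟨u, rfl⟩
  have hELmem : ∀ u, E.L u ∈ E.LMlt := fun u => Subgroup.subset_closure ⟨u, rfl⟩
  -- pointwise descriptions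
  have hLapp : ∀ (u p : Q × A), E.L u p = (S.mul u.1 p.1, g u.2 + f p.2 + θ u.1 p.1) :=
    fun u p => rfl
  have hLinv : ∀ (u p : Q × A), (E.L u)⁻¹ p =
      (S.ldiv u.1 p.1, f.symm (p.2 - g u.2 - θ u.1 (S.ldiv u.1 p.1))) := fun u p => rfl
  have hTLapp : ∀ (u q : ({p : Q × A | p.1 = x} : Set (Q × A))),
      ((T.L u q : Q × A)) = E.mul u.1 q.1 := fun u q => rfl
  have hTLinv : ∀ (u q : ({p : Q × A | p.1 = x} : Set (Q × A))),
      (((T.L u)⁻¹ q : Q × A)) = E.ldiv u.1 q.1 := fun u q => rfl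
  -- generators are translations
  have genTr : ∀ u v : Q × A, u.1 = v.1 → E.L u * (E.L v)⁻¹ = trP (g u.2 - g v.2) := by
    intro u v huv
    ext p
    · show (E.L u ((E.L v)⁻¹ p)).1 = _
      rw [hLinv, hLapp]
      simp [huv, S.mul_ldiv]
    · show (E.L u ((E.L v)⁻¹ p)).2 = _
      rw [hLinv, hLapp]
      simp only [huv, AddEquiv.apply_symm_apply]
      simp
      abel
  -- conjugation of global translations
  have conjL : ∀ (u : Q × A) (s : A), E.L u * trP s * (E.L u)⁻¹ = trP (f s) := by
    intro u s
    ext p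
    · show (E.L u (trP s ((E.L u)⁻¹ p))).1 = _
      rw [hLinv]
      simp [hLapp, S.mul_ldiv]
    · show (E.L u (trP s ((E.L u)⁻¹ p))).2 = _
      rw [hLinv]
      simp [hLapp, S.mul_ldiv, map_add]
      abel
  have conjLinv : ∀ (u : Q × A) (s : A), (E.L u)⁻¹ * trP s * E.L u = trP (f.symm s) := by
    intro u s
    ext p
    · show ((E.L u)⁻¹ (trP s (E.L u p))).1 = _
      rw [hLapp]
      simp [hLinv, S.ldiv_mul]
    · show ((E.L u)⁻¹ (trP s (E.L u p))).2 = _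
      rw [hLapp]
      simp only [trP_apply, hLinv, S.ldiv_mul]
      rw [show g u.2 + f p.2 + θ u.1 p.1 + s - g u.2 - θ u.1 p.1 = f p.2 + s by abel]
      simp
  -- block translations in T.LMlt
  have key0 : ∀ c : A, blkTr x (g c) ∈ T.LMlt := by
    intro c
    have heq : blkTr x (g c) = T.L ⟨(x, c), rfl⟩ * (T.L ⟨(x, 0), rfl⟩)⁻¹ := by
      ext q
      all_goals have hq : q.1.1 = x := q.2
      · show _ = ((T.L _ ((T.L _)⁻¹ q) : Q × A)).1
        rw [hTLapp, hTLinv]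
        show x = (E.mul (x, c) (E.ldiv (x, 0) q.1)).1
        show x = S.mul x (S.ldiv x q.1.1)
        rw [S.mul_ldiv, hq]
      · show _ = ((T.L _ ((T.L _)⁻¹ q) : Q × A)).2
        rw [hTLapp, hTLinv]
        show q.1.2 + g c = g c + f (f.symm (q.1.2 - g 0 - θ x (S.ldiv x q.1.1))) + θ x (S.ldiv x q.1.1)
        simp
        abel
    rw [heq]
    exact mul_mem (hLmem _) (inv_mem (hLmem _))
  have keyf : ∀ s : A, blkTr x s ∈ T.LMlt → blkTr x (f s) ∈ T.LMlt := by
    intro s hs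
    have heq : blkTr x (f s) = T.L ⟨(x, 0), rfl⟩ * blkTr x s * (T.L ⟨(x, 0), rfl⟩)⁻¹ := by
      ext q
      all_goals have hq : q.1.1 = x := q.2
      · show _ = ((T.L _ (blkTr x s ((T.L _)⁻¹ q)) : Q × A)).1
        rw [hTLapp]
        show x = S.mul x x
        rw [hidem x]
      · show _ = ((T.L _ (blkTr x s ((T.L _)⁻¹ q)) : Q × A)).2
        rw [hTLapp]
        show q.1.2 + f s = g 0 + f ((E.ldiv (x, 0) q.1).2 + s) + θ x x
        show q.1.2 + f s = g 0 + f (f.symm (q.1.2 - g 0 - θ x (S.ldiv x q.1.1)) + s) + θ x x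
        rw [hq, hldiv]
        simp [map_add]
        abel
    rw [heq]
    exact mul_mem (mul_mem (hLmem _) hs) (inv_mem (hLmem _))
  have keyfs : ∀ s : A, blkTr x s ∈ T.LMlt → blkTr x (f.symm s) ∈ T.LMlt := by
    intro s hs
    have heq : blkTr x (f.symm s) = (T.L ⟨(x, 0), rfl⟩)⁻¹ * blkTr x s * T.L ⟨(x, 0), rfl⟩ := by
      ext q
      all_goals have hq : q.1.1 = x := q.2
      · show _ = (((T.L _)⁻¹ (blkTr x s (T.L _ q)) : Q × A)).1
        rw [hTLinv]
        show x = S.ldiv x x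
        rw [hldiv]
      · show _ = (((T.L _)⁻¹ (blkTr x s (T.L _ q)) : Q × A)).2
        rw [hTLinv]
        show q.1.2 + f.symm s =
          f.symm (((blkTr x s (T.L ⟨(x, 0), rfl⟩ q)) : Q × A).2 - g 0 - θ x (S.ldiv x x))
        show q.1.2 + f.symm s =
          f.symm ((E.mul (x, 0) q.1).2 + s - g 0 - θ x (S.ldiv x x))
        show q.1.2 + f.symm s =
          f.symm (g 0 + f q.1.2 + θ x q.1.1 + s - g 0 - θ x (S.ldiv x x))
        rw [hq, hldiv]
        rw [show g 0 + f q.1.2 + θ x x + s - g 0 - θ x x = f q.1.2 + s by abel]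
        simp [map_add]
    rw [heq]
    exact mul_mem (mul_mem (inv_mem (hLmem _)) hs) (hLmem _)
  -- the subgroup of liftable translations
  let DSub : Subgroup (Equiv.Perm (Q × A)) :=
    { carrier := {h | ∃ s : A, blkTr x s ∈ T.LMlt ∧ h = trP s}
      one_mem' := ⟨0, by rw [blkTr_zero]; exact one_mem _, trP_zero.symm⟩
      mul_mem' := by
        rintro a b ⟨s, hs, rfl⟩ ⟨t, ht, rfl⟩
        exact ⟨t + s, by rw [← blkTr_mul]; exact mul_mem hs ht, trP_mul s t⟩
      inv_mem' := by
        rintro a ⟨s, hs, rfl⟩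
        exact ⟨-s, by rw [← blkTr_inv]; exact inv_mem hs, trP_inv s⟩ }
  have conjStab : ∀ k ∈ E.LMlt, (∀ h ∈ DSub, k * h * k⁻¹ ∈ DSub) ∧
      (∀ h ∈ DSub, k⁻¹ * h * k ∈ DSub) := by
    intro k hk
    induction hk using Subgroup.closure_induction with
    | mem w hw =>
      obtain ⟨u, rfl⟩ := hw
      constructor
      · rintro h ⟨s, hs, rfl⟩
        exact ⟨f s, keyf s hs, by rw [conjL]⟩
      · rintro h ⟨s, hs, rfl⟩
        exact ⟨f.symm s, keyfs s hs, by rw [conjLinv]⟩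
    | one =>
      constructor <;> intro h hh <;> simpa using hh
    | mul a b ha hb iha ihb =>
      constructor
      · intro h hh
        have h1 : a * b * h * (a * b)⁻¹ = a * (b * h * b⁻¹) * a⁻¹ := by group
        rw [h1]
        exact iha.1 _ (ihb.1 _ hh)
      · intro h hh
        have h1 : (a * b)⁻¹ * h * (a * b) = b⁻¹ * (a⁻¹ * h * a) * b := by group
        rw [h1]
        exact ihb.2 _ (iha.2 _ hh)
    | inv a ha iha =>
      constructor
      · intro h hh
        rw [inv_inv]
        exact iha.2 _ hh
      · intro h hh
        rw [inv_inv]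
        exact iha.1 _ hh
  have hsub : E.disRel (Setoid.ker (Prod.fst : Q × A → Q)) ≤ DSub := by
    rw [disRel]
    refine (Subgroup.closure_le _).mpr ?_
    rintro w ⟨u, v, k, huv, hk, rfl⟩
    have h1 : E.L u * (E.L v)⁻¹ = trP (g u.2 - g v.2) := genTr u v huv
    have hgmem : blkTr x (g u.2 - g v.2) ∈ T.LMlt := by
      have hmem := mul_mem (key0 u.2) (inv_mem (key0 v.2))
      rw [blkTr_inv, blkTr_mul] at hmem
      rwa [show g u.2 - g v.2 = -(g v.2) + g u.2 by abel]
    have hD : E.L u * (E.L v)⁻¹ ∈ DSub := ⟨_, hgmem, h1⟩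
    exact (conjStab k hk).1 _ hD
  -- conclude
  intro q₁ q₂
  have hq₁ : q₁.1.1 = x := q₁.2
  have hq₂ : q₂.1.1 = x := q₂.2
  have hker : (Setoid.ker (Prod.fst : Q × A → Q)).r q₁.1 q₂.1 := hq₁.trans hq₂.symm
  rw [horb] at hker
  obtain ⟨h, hh, hval⟩ := hker
  obtain ⟨s, hs, rfl⟩ := hsub hh
  refine ⟨blkTr x s, hs, ?_⟩
  apply Subtype.ext
  rw [hval]
  show ((q₂.1.1, q₂.1.2 + s) : Q × A) = (x, q₂.1.2 + s)
  rw [hq₂]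

end BlockConnected

/-- If `Q` is idempotent and `α = ker p₁` satisfies `α = O_{Dis_α}`, then every block
of `α` is connected. -/
theorem statement_15 {Q : Type*} {A : Type*} [AddCommGroup A] (S : LeftQuasigroup Q)
    (g : A →+ A) (f : AddAut A) (θ : Q → Q → A) (hidem : S.Idempotent)
    (horb : Setoid.ker (Prod.fst : Q × A → Q) =
      orbRel ((S.affExt A g f θ).disRel (Setoid.ker (Prod.fst : Q × A → Q)))) :
    ∀ x : Q,
      ((S.affExt A g f θ).sub {p : Q × A | p.1 = x}
        (fun p hp q hq => by
          show S.mul p.1 q.1 = x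
          rw [show p.1 = x from hp, show q.1 = x from hq, hidem x])
        (fun p hp q hq => by
          show S.ldiv p.1 q.1 = x
          have h := S.ldiv_mul x x
          rw [hidem x] at h
          rw [show p.1 = x from hp, show q.1 = x from hq, h])).Connected := by
  intro x
  exact blockConnAux S g f θ hidem horb x _ _

end LeftQuasigroup

end PaperLQ
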